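/- Let P be a bounded operator on a Hilbert space H and γ, γ̃: Ω → H \ {0} holomorphic non-vanishing maps on a connected open set Ω, spanning line bundles whose sections span H, such that for every w ∈ Ω, P γ(w) is a nonzero scalar multiple of γ̃(w) or zero. If P ≠ 0 then the range of P is dense in the closed span of {γ̃(w) : w ∈ Ω}. -/

import Mathlib

/-- Let `P` be a bounded operator, `γ, γ̃` non-vanishing holomorphic `H`-valued maps on a
connected open set `Ω`, with the sections `γ(w)` spanning `H`, and suppose that for every
`w ∈ Ω`, `P γ(w)` is a scalar multiple of `γ̃(w)`.  If `P ≠ 0`, then the range of `P` is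
dense in the closed span of `{γ̃(w) : w ∈ Ω}`. -/
theorem stmt_6 {H : Type*} [NormedAddCommGroup H] [InnerProductSpace ℂ H]
    [CompleteSpace H]
    {Ω : Set ℂ} (hΩopen : IsOpen Ω) (hΩconn : IsConnected Ω)
    (γ γt : ℂ → H)
    (hγ : DifferentiableOn ℂ γ Ω) (hγt : DifferentiableOn ℂ γt Ω)
    (hnv : ∀ w ∈ Ω, γ w ≠ 0) (hnvt : ∀ w ∈ Ω, γt w ≠ 0)
    (hspan : (Submodule.span ℂ (γ '' Ω)).topologicalClosure = ⊤)
    (P : H →L[ℂ] H)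
    (hint : ∀ w ∈ Ω, ∃ c : ℂ, P (γ w) = c • γt w)
    (hP : P ≠ 0) :
    (LinearMap.range P.toLinearMap).topologicalClosure
      = (Submodule.span ℂ (γt '' Ω)).topologicalClosure := by
  -- f = P ∘ γ is analytic on Ω
  have hf : DifferentiableOn ℂ (fun z => P (γ z)) Ω :=
    P.differentiable.comp_differentiableOn hγ
  have hfa : AnalyticOnNhd ℂ (fun z => P (γ z)) Ω := hf.analyticOnNhd hΩopen
  -- P ∘ γ is not identically zero on Ω
  have hne : ¬ Set.EqOn (fun z => P (γ z)) 0 Ω := by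
    intro h
    apply hP
    have hker : (Submodule.span ℂ (γ '' Ω)).topologicalClosure ≤ LinearMap.ker P.toLinearMap := by
      apply Submodule.topologicalClosure_minimal
      · rw [Submodule.span_le]
        rintro x ⟨w, hw, rfl⟩
        exact h hw
      · exact ContinuousLinearMap.isClosed_ker P
    rw [hspan] at hker
    ext x
    simpa using hker (Submodule.mem_top (x := x))
  -- `⊇` direction: each γt w₀ is in the closure of the range of P
  have hmem : ∀ w₀ ∈ Ω, γt w₀ ∈ (LinearMap.range P.toLinearMap).topologicalClosure := by
    intro w₀ hw₀
    have hfreq : ¬ (∃ᶠ z in nhdsWithin w₀ {w₀}ᶜ, P (γ z) = 0) := by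
      intro hfr
      exact hne (hfa.eqOn_zero_of_preconnected_of_frequently_eq_zero
        hΩconn.isPreconnected hw₀ hfr)
    rw [Filter.not_frequently] at hfreq
    have hΩev : ∀ᶠ z in nhdsWithin w₀ {w₀}ᶜ, z ∈ Ω :=
      Filter.Eventually.filter_mono nhdsWithin_le_nhds (hΩopen.mem_nhds hw₀)
    have hev : ∀ᶠ z in nhdsWithin w₀ {w₀}ᶜ,
        γt z ∈ (LinearMap.range P.toLinearMap : Set H) := by
      filter_upwards [hfreq, hΩev] with z hz hzΩ
      obtain ⟨c, hc⟩ := hint z hzΩ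
      have hc0 : c ≠ 0 := by
        rintro rfl
        simp only [zero_smul] at hc
        exact hz hc
      refine ⟨c⁻¹ • γ z, ?_⟩
      simp [hc, smul_smul, inv_mul_cancel₀ hc0]
    have htend : Filter.Tendsto γt (nhdsWithin w₀ {w₀}ᶜ) (nhds (γt w₀)) := by
      have : ContinuousAt γt w₀ :=
        (hγt.differentiableAt (hΩopen.mem_nhds hw₀)).continuousAt
      exact this.continuousWithinAt.tendsto
    have := mem_closure_of_tendsto htend hev
    exact this
  -- combine
  apply le_antisymm
  · apply Submodule.topologicalClosure_minimal
    · rintro x ⟨y, rfl⟩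
      have hy : y ∈ (⊤ : Submodule ℂ H) := Submodule.mem_top
      rw [← hspan] at hy
      -- P maps closure of span γ Ω into closure of span γt Ω
      have hmap : ∀ v ∈ (Submodule.span ℂ (γ '' Ω)).topologicalClosure,
          P v ∈ (Submodule.span ℂ (γt '' Ω)).topologicalClosure := by
        intro v hv
        have hsub : Submodule.span ℂ (γ '' Ω) ≤
            (Submodule.span ℂ (γt '' Ω)).topologicalClosure.comap P.toLinearMap := by
          rw [Submodule.span_le]
          rintro x ⟨w, hw, rfl⟩
          obtain ⟨c, hc⟩ := hint w hw
          have : P (γ w) ∈ Submodule.span ℂ (γt '' Ω) := by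
            rw [hc]
            exact Submodule.smul_mem _ _
              (Submodule.subset_span ⟨w, hw, rfl⟩)
          exact Submodule.le_topologicalClosure _ this
        have hclosed : IsClosed
            (((Submodule.span ℂ (γt '' Ω)).topologicalClosure.comap P.toLinearMap :
              Submodule ℂ H) : Set H) := by
          have : ((Submodule.span ℂ (γt '' Ω)).topologicalClosure.comap P.toLinearMap :
              Set H) = P ⁻¹' ((Submodule.span ℂ (γt '' Ω)).topologicalClosure : Set H) :=
            rfl
          rw [this]
          exact (Submodule.isClosed_topologicalClosure _).preimage P.continuous
        exact Submodule.topologicalClosure_minimal _ hsub hclosed hv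
      exact hmap y hy
    · exact Submodule.isClosed_topologicalClosure _
  · apply Submodule.topologicalClosure_minimal
    · rw [Submodule.span_le]
      rintro x ⟨w, hw, rfl⟩
      exact hmem w hw
    · exact Submodule.isClosed_topologicalClosure _
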